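/- For u > arccosh(3/2), the function u ↦ φ(u)/u, where φ(u) = arccosh(cosh u − 1/2), is strictly monotonically increasing. -/
import Mathlib


noncomputable def arcosh (x : ℝ) : ℝ := Real.log (x + Real.sqrt (x ^ 2 - 1))

noncomputable def kappa : ℝ := arcosh (3 / 2)

noncomputable def phi (u : ℝ) : ℝ := arcosh (Real.cosh u - 1 / 2)

lemma sqrt5_sq : Real.sqrt 5 ^ 2 = 5 := Real.sq_sqrt (by norm_num)

lemma sqrt5_pos : 0 < Real.sqrt 5 := Real.sqrt_pos.mpr (by norm_num)

lemma kappa_eq : kappa = Real.log ((3 + Real.sqrt 5) / 2) := by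
  have h2 : Real.sqrt ((3/2:ℝ)^2 - 1) = Real.sqrt 5 / 2 := by
    rw [show ((3/2:ℝ)^2 - 1) = 5 / 2^2 by norm_num, Real.sqrt_div (by norm_num),
      Real.sqrt_sq (by norm_num : (0:ℝ) ≤ 2)]
  rw [kappa, arcosh, h2]
  ring_nf

lemma kappa_pos : 0 < kappa := by
  rw [kappa_eq]
  apply Real.log_pos
  nlinarith [sqrt5_pos]

lemma cosh_kappa : Real.cosh kappa = 3 / 2 := by
  rw [kappa_eq, Real.cosh_log (by nlinarith [sqrt5_pos])]
  have h : ((3 + Real.sqrt 5) / 2)⁻¹ = (3 - Real.sqrt 5) / 2 :=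
    inv_eq_of_mul_eq_one_right (by nlinarith [sqrt5_sq])
  rw [h]; ring

lemma cosh_gt {u : ℝ} (hu : kappa < u) : 3 / 2 < Real.cosh u := by
  rw [← cosh_kappa, Real.cosh_lt_cosh]
  rw [abs_of_pos kappa_pos, abs_of_pos (kappa_pos.trans hu)]
  exact hu

/-- The key derivative computation with positivity. -/
lemma hasDerivAt_phi {u : ℝ} (hu : kappa < u) :
    HasDerivAt phi (Real.sinh u / Real.sqrt ((Real.cosh u - 1/2)^2 - 1)) u := by
  have hc : 3 / 2 < Real.cosh u := cosh_gt hu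
  set c := Real.cosh u with hcdef
  have harg : 0 < (c - 1/2)^2 - 1 := by nlinarith
  set s := Real.sqrt ((c - 1/2)^2 - 1) with hsdef
  have hs : 0 < s := Real.sqrt_pos.mpr harg
  have hs2 : s ^ 2 = (c - 1/2)^2 - 1 := Real.sq_sqrt harg.le
  -- derivative of inner function x ↦ cosh x - 1/2
  have h1 : HasDerivAt (fun x => Real.cosh x - 1/2) (Real.sinh u) u :=
    (Real.hasDerivAt_cosh u).sub_const _
  -- derivative of x ↦ (cosh x - 1/2)^2 - 1
  have h2 : HasDerivAt (fun x => (Real.cosh x - 1/2)^2 - 1)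
      (2 * (c - 1/2) * Real.sinh u) u := by
    have := (h1.pow 2).sub_const 1
    simpa [hcdef, mul_comm, mul_assoc, mul_left_comm] using this
  -- derivative of sqrt
  have h3 : HasDerivAt (fun x => Real.sqrt ((Real.cosh x - 1/2)^2 - 1))
      (2 * (c - 1/2) * Real.sinh u / (2 * s)) u :=
    h2.sqrt (by simpa [hcdef] using harg.ne')
  -- derivative of the sum
  have h4 : HasDerivAt (fun x => (Real.cosh x - 1/2) + Real.sqrt ((Real.cosh x - 1/2)^2 - 1))
      (Real.sinh u + 2 * (c - 1/2) * Real.sinh u / (2 * s)) u := h1.add h3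
  have hgpos : 0 < (c - 1/2) + s := by nlinarith
  have h5 := h4.log hgpos.ne'
  have heq : (Real.sinh u + 2 * (c - 1/2) * Real.sinh u / (2 * s)) / ((c - 1/2) + s)
      = Real.sinh u / s := by
    rw [div_eq_div_iff (by positivity) hs.ne']
    field_simp
    nlinarith [hs2]
  have : phi = fun x => Real.log ((Real.cosh x - 1/2) + Real.sqrt ((Real.cosh x - 1/2)^2 - 1)) := by
    funext x; simp [phi, arcosh]
  rw [this]
  convert h5 using 1
  rw [← heq, hcdef, hsdef]

lemma phi_lt {u : ℝ} (hu : kappa < u) : phi u < u := by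
  have hc : 3 / 2 < Real.cosh u := cosh_gt hu
  have hupos : 0 < u := kappa_pos.trans hu
  have hsinh : 0 < Real.sinh u := Real.sinh_pos_iff.mpr hupos
  have harg : 0 < (Real.cosh u - 1/2)^2 - 1 := by nlinarith
  have hlt : Real.sqrt ((Real.cosh u - 1/2)^2 - 1) < Real.sinh u := by
    have h1 : (Real.cosh u - 1/2)^2 - 1 < Real.sinh u ^ 2 := by
      nlinarith [Real.cosh_sq u]
    calc Real.sqrt ((Real.cosh u - 1/2)^2 - 1) < Real.sqrt (Real.sinh u ^ 2) :=
          Real.sqrt_lt_sqrt harg.le h1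
      _ = Real.sinh u := by rw [Real.sqrt_sq hsinh.le]
  have : (Real.cosh u - 1/2) + Real.sqrt ((Real.cosh u - 1/2)^2 - 1) < Real.exp u := by
    rw [← Real.cosh_add_sinh]; linarith
  have hpos : 0 < (Real.cosh u - 1/2) + Real.sqrt ((Real.cosh u - 1/2)^2 - 1) := by
    have := Real.sqrt_nonneg ((Real.cosh u - 1/2)^2 - 1); linarith
  have := Real.log_lt_log hpos this
  rw [Real.log_exp] at this
  simpa [phi, arcosh, show (1:ℝ)/2 = 1/2 by norm_num] using this

lemma hasDerivAt_quot {u : ℝ} (hu : kappa < u) :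
    HasDerivAt (fun x => phi x / x)
      ((Real.sinh u / Real.sqrt ((Real.cosh u - 1/2)^2 - 1) * u - phi u * 1) / u ^ 2) u :=
  (hasDerivAt_phi hu).div (hasDerivAt_id u) (kappa_pos.trans hu).ne'

lemma deriv_pos {u : ℝ} (hu : kappa < u) :
    0 < (Real.sinh u / Real.sqrt ((Real.cosh u - 1/2)^2 - 1) * u - phi u * 1) / u ^ 2 := by
  have hc : 3 / 2 < Real.cosh u := cosh_gt hu
  have hupos : 0 < u := kappa_pos.trans hu
  have hsinh : 0 < Real.sinh u := Real.sinh_pos_iff.mpr hupos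
  have harg : 0 < (Real.cosh u - 1/2)^2 - 1 := by nlinarith
  set s := Real.sqrt ((Real.cosh u - 1/2)^2 - 1) with hsdef
  have hs : 0 < s := Real.sqrt_pos.mpr harg
  have hlt : s < Real.sinh u := by
    have h1 : (Real.cosh u - 1/2)^2 - 1 < Real.sinh u ^ 2 := by
      nlinarith [Real.cosh_sq u]
    calc s < Real.sqrt (Real.sinh u ^ 2) := Real.sqrt_lt_sqrt harg.le h1
      _ = Real.sinh u := by rw [Real.sqrt_sq hsinh.le]
  have h1 : 1 < Real.sinh u / s := (one_lt_div hs).mpr hlt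
  have h2 : u < Real.sinh u / s * u := by
    nlinarith
  have h3 : phi u < u := phi_lt hu
  apply div_pos _ (by positivity)
  nlinarith

theorem phi_div_u_strictMono : StrictMonoOn (fun u => phi u / u) (Set.Ioi kappa) := by
  apply strictMonoOn_of_deriv_pos (convex_Ioi _)
  · intro x hx
    exact ((hasDerivAt_quot hx).differentiableAt).continuousAt.continuousWithinAt
  · intro x hx
    rw [interior_Ioi] at hx
    rw [(hasDerivAt_quot hx).deriv]
    exact deriv_pos hx
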